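/- Let f(x;α,β) = (α/β)(x/β)^{α-1} exp(-(x/β)^α) be the Weibull density with α, β > 0, let q > 0, q ≠ 1, and define the log_q score functions ψ_α(x) = f^{1-q}(x;α,β) { 1/α + [1 - (x/β)^α] log(x/β) } and ψ_β(x) = (α/β) f^{1-q}(x;α,β) [ (x/β)^α - 1 ]. Then as x → ∞: if q > 1 then ψ_α(x) → -∞ and ψ_β(x) → +∞ (for every α > 0), while if 0 < q < 1 then ψ_α(x) → 0 and ψ_β(x) → 0 (for every α > 0). -/

import Mathlib

open Filter Topology Real MeasureTheory

/-- The Weibull probability density function with shape `α` and scale `β`. -/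
noncomputable def weibullPDF (α β x : ℝ) : ℝ :=
  (α / β) * (x / β) ^ (α - 1) * Real.exp (-(x / β) ^ α)

private lemma aux_zero (c b : ℝ) (hb : 0 < b) :
    Tendsto (fun t : ℝ => t ^ c * Real.exp (-(b * t))) atTop (𝓝 0) := by
  simpa [neg_mul] using tendsto_rpow_mul_exp_neg_mul_atTop_nhds_zero c b hb

private lemma aux_log_zero (c b : ℝ) (hb : 0 < b) :
    Tendsto (fun t : ℝ => t ^ c * Real.log t * Real.exp (-(b * t))) atTop (𝓝 0) := by
  apply squeeze_zero' (g := fun t : ℝ => t ^ (c + 1) * Real.exp (-(b * t)))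
  · filter_upwards [eventually_ge_atTop (1 : ℝ)] with t ht
    have h0 : (0:ℝ) < t := lt_of_lt_of_le one_pos ht
    have : 0 ≤ Real.log t := Real.log_nonneg ht
    positivity
  · filter_upwards [eventually_ge_atTop (1 : ℝ)] with t ht
    have h0 : (0:ℝ) < t := lt_of_lt_of_le one_pos ht
    rw [Real.rpow_add_one h0.ne' c]
    have hlog : Real.log t ≤ t := (Real.log_le_sub_one_of_pos h0).trans (by linarith)
    have h1 : t ^ c * Real.log t ≤ t ^ c * t :=
      mul_le_mul_of_nonneg_left hlog (Real.rpow_nonneg h0.le c)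
    exact mul_le_mul_of_nonneg_right h1 (Real.exp_pos _).le
  · exact aux_zero (c + 1) b hb

private lemma aux_top (c b : ℝ) (hb : 0 < b) :
    Tendsto (fun t : ℝ => t ^ c * Real.exp (b * t)) atTop atTop := by
  refine (tendsto_exp_mul_div_rpow_atTop (-c) b hb).congr' ?_
  filter_upwards [eventually_gt_atTop (0 : ℝ)] with t ht
  simp [Real.rpow_neg ht.le, div_eq_mul_inv, mul_comm]


/-- Limits as `x → ∞` of the `log_q` score functions `ψ_α` and `ψ_β` of the Weibull
distribution: for `q > 1` they diverge to `-∞` and `+∞` respectively, while for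
`0 < q < 1` both tend to `0`. -/
theorem weibullPDF_logq_score_limits (α β q : ℝ) (hα : 0 < α) (hβ : 0 < β)
    (hq0 : 0 < q) (hq1 : q ≠ 1) :
    (1 < q →
      Tendsto (fun x => (weibullPDF α β x) ^ (1 - q) *
        (1 / α + (1 - (x / β) ^ α) * Real.log (x / β))) atTop atBot ∧
      Tendsto (fun x => (α / β) * (weibullPDF α β x) ^ (1 - q) * ((x / β) ^ α - 1))
        atTop atTop) ∧
    (q < 1 →
      Tendsto (fun x => (weibullPDF α β x) ^ (1 - q) *
        (1 / α + (1 - (x / β) ^ α) * Real.log (x / β))) atTop (𝓝 0) ∧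
      Tendsto (fun x => (α / β) * (weibullPDF α β x) ^ (1 - q) * ((x / β) ^ α - 1))
        atTop (𝓝 0)) := by
  set C : ℝ := (α / β) ^ (1 - q) with hC
  have hCpos : 0 < C := Real.rpow_pos_of_pos (div_pos hα hβ) _
  set c : ℝ := (α - 1) * (1 - q) / α with hc
  -- the substitution t = (x/β)^α tends to atTop
  have hu : Tendsto (fun x : ℝ => x / β) atTop atTop :=
    tendsto_id.atTop_div_const hβ
  have ht : Tendsto (fun x : ℝ => (x / β) ^ α) atTop atTop :=
    (tendsto_rpow_atTop hα).comp hu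
  -- key pointwise identity for x > β
  have key : ∀ x : ℝ, β < x →
      (weibullPDF α β x) ^ (1 - q)
        = C * ((x / β) ^ α) ^ c * Real.exp (-((1 - q) * (x / β) ^ α)) := by
    intro x hx
    have hu1 : (1:ℝ) < x / β := (one_lt_div hβ).2 hx
    have hu0 : (0:ℝ) < x / β := lt_trans one_pos hu1
    rw [weibullPDF, hC, Real.mul_rpow (by positivity) (Real.exp_pos _).le,
      Real.mul_rpow (div_pos hα hβ).le (Real.rpow_nonneg hu0.le _)]
    rw [← Real.rpow_mul hu0.le, ← Real.rpow_mul hu0.le, ← Real.exp_mul]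
    have h1 : α * c = (α - 1) * (1 - q) := by
      rw [hc]; field_simp
    rw [h1, show -(x / β) ^ α * (1 - q) = -((1 - q) * (x / β) ^ α) from by ring]
  have klog : ∀ x : ℝ, β < x →
      Real.log (x / β) = Real.log ((x / β) ^ α) / α := by
    intro x hx
    have hu0 : (0:ℝ) < x / β := lt_trans one_pos ((one_lt_div hβ).2 hx)
    rw [Real.log_rpow hu0]
    field_simp
  constructor
  · intro hq
    set b : ℝ := q - 1 with hbdef
    have hb : 0 < b := by simp [hbdef]; linarith
    have hbt : ∀ t : ℝ, -((1 - q) * t) = b * t := fun t => by rw [hbdef]; ring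
    have htop : Tendsto (fun t : ℝ => t ^ c * Real.exp (b * t)) atTop atTop :=
      aux_top c b hb
    have hsub : Tendsto (fun t : ℝ => t - 1) atTop atTop :=
      tendsto_atTop_add_const_right atTop (-1) tendsto_id |>.congr
        (fun t => by simp [sub_eq_add_neg])
    constructor
    · -- ψ_α → -∞
      have hlogdiv : Tendsto (fun t : ℝ => Real.log t / α) atTop atTop :=
        Real.tendsto_log_atTop.atTop_div_const hα
      have hfac : Tendsto (fun t : ℝ => 1 / α + (1 - t) * (Real.log t / α)) atTop atBot := by
        have h2 : Tendsto (fun t : ℝ => (1 - t) * (Real.log t / α)) atTop atBot := by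
          have := tendsto_neg_atTop_atBot.comp (hsub.atTop_mul_atTop₀ hlogdiv)
          refine this.congr (fun t => ?_)
          simp only [Function.comp]
          ring
        exact tendsto_atBot_add_const_left atTop (1 / α) h2
      have hF : Tendsto
          (fun t : ℝ => C * (t ^ c * Real.exp (b * t)) *
            (1 / α + (1 - t) * (Real.log t / α))) atTop atBot :=
        ((htop.atTop_mul_atBot₀ hfac).const_mul_atBot hCpos).congr
          (fun t => by ring)
      refine (hF.comp ht).congr' ?_
      filter_upwards [eventually_gt_atTop β] with x hx
      simp only [Function.comp]
      rw [key x hx, hbt, klog x hx]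
      ring
    · -- ψ_β → +∞
      have hG : Tendsto
          (fun t : ℝ => α / β * (C * t ^ c * Real.exp (b * t)) * (t - 1)) atTop atTop := by
        have h := (htop.atTop_mul_atTop₀ hsub).const_mul_atTop
          (mul_pos (div_pos hα hβ) hCpos)
        exact h.congr (fun t => by ring)
      refine (hG.comp ht).congr' ?_
      filter_upwards [eventually_gt_atTop β] with x hx
      simp only [Function.comp]
      rw [key x hx, hbt]
  · intro hq
    set s : ℝ := 1 - q with hsdef
    have hs : 0 < s := by simp [hsdef]; linarith
    constructor
    · -- ψ_α → 0
      have h0 : Tendsto (fun t : ℝ =>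
          C / α * ((t ^ c * Real.exp (-(s * t)) + t ^ c * Real.log t * Real.exp (-(s * t)))
            - t ^ (c + 1) * Real.log t * Real.exp (-(s * t)))) atTop (𝓝 0) := by
        have := (((aux_zero c s hs).add (aux_log_zero c s hs)).sub
          (aux_log_zero (c + 1) s hs)).const_mul (C / α)
        simpa using this
      refine (h0.comp ht).congr' ?_
      filter_upwards [eventually_gt_atTop β] with x hx
      have hu0 : (0:ℝ) < x / β := lt_trans one_pos ((one_lt_div hβ).2 hx)
      have htpos : (0:ℝ) < (x / β) ^ α := Real.rpow_pos_of_pos hu0 α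
      simp only [Function.comp]
      rw [Real.rpow_add_one htpos.ne' c, key x hx, klog x hx, hsdef]
      have harg : -((1 - q) * (x / β) ^ α) = -(s * (x / β) ^ α) := by rw [hsdef]
      rw [harg]
      ring
    · -- ψ_β → 0
      have h0 : Tendsto (fun t : ℝ =>
          α / β * C * (t ^ (c + 1) * Real.exp (-(s * t)) - t ^ c * Real.exp (-(s * t))))
          atTop (𝓝 0) := by
        have := ((aux_zero (c + 1) s hs).sub (aux_zero c s hs)).const_mul (α / β * C)
        simpa using this
      refine (h0.comp ht).congr' ?_
      filter_upwards [eventually_gt_atTop β] with x hx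
      have hu0 : (0:ℝ) < x / β := lt_trans one_pos ((one_lt_div hβ).2 hx)
      have htpos : (0:ℝ) < (x / β) ^ α := Real.rpow_pos_of_pos hu0 α
      simp only [Function.comp]
      rw [Real.rpow_add_one htpos.ne' c, key x hx]
      have harg : -((1 - q) * (x / β) ^ α) = -(s * (x / β) ^ α) := by rw [hsdef]
      rw [harg]
      ring
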